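/- For every natural number m ≥ 1 and every real ε ∈ (0,1), there is a random polynomial P over F₂ in m variables of degree at most ⌈log₂(1/ε)⌉ such that for every x ∈ {0,1}^m, Pr[P(x) = OR_m(x)] ≥ 1 − ε, where OR_m(x) = 1 iff some coordinate of x is 1. Explicitly, one may take P(x) = 1 − Π_{j=1}^{k} (1 − Σ_i r_{j,i} x_i) with k = ⌈log₂(1/ε)⌉ and r_{j,i} independent uniform bits in F₂. -/

import Mathlib

open Finset

/-- Evaluation of an `F₂`-polynomial at a Boolean point. -/
noncomputable def evalBool {m : ℕ} (P : MvPolynomial (Fin m) (ZMod 2)) (x : Fin m → Bool) : ZMod 2 :=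
  MvPolynomial.eval (fun i => if x i then 1 else 0) P

/-- The OR function on `m` bits, valued in `F₂`. -/
def ORval (m : ℕ) (x : Fin m → Bool) : ZMod 2 :=
  if ∃ i, x i = true then 1 else 0

lemma half_card' {m : ℕ} (b : Fin m → ZMod 2) (i₀ : Fin m) (hb : b i₀ = 1) :
    (Finset.univ.filter (fun r : Fin m → ZMod 2 => ∑ i, r i * b i = 0)).card * 2 = 2 ^ m := by
  classical
  have key : ∀ r : Fin m → ZMod 2,
      ∑ i, Function.update r i₀ (r i₀ + 1) i * b i = (∑ i, r i * b i) + 1 := by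
    intro r
    rw [Fintype.sum_eq_add_sum_compl i₀, Fintype.sum_eq_add_sum_compl i₀ (fun i => r i * b i)]
    have hcongr : ∀ i ∈ ({i₀}ᶜ : Finset (Fin m)),
        Function.update r i₀ (r i₀ + 1) i * b i = r i * b i := by
      intro i hi
      rw [Function.update_of_ne (by simpa using hi)]
    rw [Finset.sum_congr rfl hcongr, Function.update_self, hb]
    ring
  have hinv : ∀ r : Fin m → ZMod 2,
      Function.update (Function.update r i₀ (r i₀ + 1)) i₀
        ((Function.update r i₀ (r i₀ + 1)) i₀ + 1) = r := by
    intro r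
    funext i
    by_cases h : i = i₀
    · subst h
      simp [add_assoc, CharTwo.add_self_eq_zero]
    · simp [Function.update_of_ne h]
  have hcards : (Finset.univ.filter (fun r : Fin m → ZMod 2 => ∑ i, r i * b i = 0)).card
      = (Finset.univ.filter (fun r : Fin m → ZMod 2 => ¬ (∑ i, r i * b i = 0))).card := by
    apply Finset.card_bij' (fun r _ => Function.update r i₀ (r i₀ + 1))
      (fun r _ => Function.update r i₀ (r i₀ + 1))
    · intro r hr; exact hinv r
    · intro r hr; exact hinv r
    · intro r hr
      simp only [Finset.mem_filter, Finset.mem_univ, true_and] at hr ⊢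
      rw [key, hr]
      decide
    · intro r hr
      simp only [Finset.mem_filter, Finset.mem_univ, true_and] at hr ⊢
      rw [key]
      have h1 : (∑ i, r i * b i) = 1 := by
        revert hr; generalize (∑ i, r i * b i) = a; revert a; decide
      rw [h1]; decide
  have htotal : (Finset.univ.filter (fun r : Fin m → ZMod 2 => ∑ i, r i * b i = 0)).card
      + (Finset.univ.filter (fun r : Fin m → ZMod 2 => ¬ (∑ i, r i * b i = 0))).card = 2 ^ m := by
    rw [Finset.card_filter_add_card_filter_not
      (fun r : Fin m → ZMod 2 => ∑ i, r i * b i = 0)]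
    simp [Fintype.card_fun]
  rw [mul_two]
  nth_rewrite 2 [hcards]
  exact htotal

open MvPolynomial in
theorem stmt_15 (m : ℕ) (hm : 1 ≤ m) (ε : ℝ) (hε0 : 0 < ε) (hε1 : ε < 1) :
    ∃ (N : ℕ) (μ : Fin N → ℝ) (P : Fin N → MvPolynomial (Fin m) (ZMod 2)),
      (∀ ω, 0 ≤ μ ω) ∧ (∑ ω, μ ω = 1) ∧
      (∀ ω, (P ω).totalDegree ≤ ⌈Real.logb 2 (1 / ε)⌉₊) ∧
      ∀ x : Fin m → Bool,
        1 - ε ≤ ∑ ω ∈ {ω | evalBool (P ω) x = ORval m x}, μ ω := by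
  classical
  set k := ⌈Real.logb 2 (1 / ε)⌉₊ with hk
  have h2k : (1:ℝ)/ε ≤ 2 ^ k := by
    have h1 : (1:ℝ)/ε = (2:ℝ) ^ (Real.logb 2 (1/ε)) :=
      (Real.rpow_logb (by norm_num) (by norm_num) (by positivity)).symm
    calc (1:ℝ)/ε = (2:ℝ) ^ (Real.logb 2 (1/ε)) := h1
    _ ≤ (2:ℝ) ^ ((k:ℝ)) := Real.rpow_le_rpow_of_exponent_le (by norm_num) (Nat.le_ceil _)
    _ = 2 ^ k := by rw [Real.rpow_natCast]
  set N := Fintype.card (Fin k → Fin m → ZMod 2) with hN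
  have hNval : N = (2 ^ m) ^ k := by
    simp [hN, Fintype.card_fun]
  have hNpos : 0 < N := Fintype.card_pos
  set e := (Fintype.equivFin (Fin k → Fin m → ZMod 2)).symm with he
  refine ⟨N, fun _ => (N : ℝ)⁻¹,
    fun ω => 1 - ∏ j : Fin k, (1 - ∑ i : Fin m, C (e ω j i) * X i), ?_, ?_, ?_, ?_⟩
  · intro ω; positivity
  · rw [Finset.sum_const, Finset.card_univ, Fintype.card_fin, nsmul_eq_mul]
    field_simp
  · intro ω
    calc (1 - ∏ j : Fin k, (1 - ∑ i : Fin m, C (e ω j i) * X i)).totalDegree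
        ≤ max (1 : MvPolynomial (Fin m) (ZMod 2)).totalDegree
          (-(∏ j : Fin k, (1 - ∑ i : Fin m, C (e ω j i) * X i))).totalDegree := by
          rw [sub_eq_add_neg]; exact totalDegree_add _ _
      _ ≤ (∏ j : Fin k, (1 - ∑ i : Fin m, C (e ω j i) * X i)).totalDegree := by
          simp [totalDegree_neg, totalDegree_one]
      _ ≤ ∑ j : Fin k, (1 - ∑ i : Fin m, C (e ω j i) * X i).totalDegree :=
          totalDegree_finset_prod _ _
      _ ≤ ∑ _j : Fin k, 1 := by
          apply Finset.sum_le_sum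
          intro j _
          calc (1 - ∑ i : Fin m, C (e ω j i) * X i).totalDegree
              ≤ max (1 : MvPolynomial (Fin m) (ZMod 2)).totalDegree
                (-(∑ i : Fin m, C (e ω j i) * X i)).totalDegree := by
                rw [sub_eq_add_neg]; exact totalDegree_add _ _
            _ ≤ (∑ i : Fin m, C (e ω j i) * X i).totalDegree := by
                simp [totalDegree_neg, totalDegree_one]
            _ ≤ Finset.univ.sup (fun i : Fin m => (C (e ω j i) * X i).totalDegree) :=
                totalDegree_finset_sum _ _
            _ ≤ 1 := by
                apply Finset.sup_le
                intro i _
                calc (C (e ω j i) * X i).totalDegree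
                    ≤ (C (e ω j i) : MvPolynomial (Fin m) (ZMod 2)).totalDegree
                      + (X i : MvPolynomial (Fin m) (ZMod 2)).totalDegree := totalDegree_mul _ _
                  _ ≤ 1 := by simp [totalDegree_C, totalDegree_X]
      _ = k := by simp
  · intro x
    set b : Fin m → ZMod 2 := fun i => if x i then 1 else 0 with hb
    have heval : ∀ ω : Fin N,
        evalBool (1 - ∏ j : Fin k, (1 - ∑ i : Fin m, C (e ω j i) * X i)) x
          = 1 - ∏ j : Fin k, (1 - ∑ i : Fin m, e ω j i * b i) := by
      intro ω
      simp [evalBool, hb]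
    by_cases hx : ∃ i, x i = true
    · obtain ⟨i₀, hi₀⟩ := hx
      have hbi₀ : b i₀ = 1 := by simp [hb, hi₀]
      have hOR : ORval m x = 1 := by
        simp only [ORval]
        rw [if_pos (⟨i₀, hi₀⟩ : ∃ i, x i = true)]
      set A : Finset (Fin m → ZMod 2) :=
        Finset.univ.filter (fun r => ∑ i, r i * b i = 0) with hA
      have hAcard : A.card * 2 = 2 ^ m := half_card' b i₀ hbi₀
      set Bad : Finset (Fin N) :=
        Finset.univ.filter (fun ω => ∀ j, ∑ i, e ω j i * b i = 0) with hBad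
      have hBadcard : Bad.card = A.card ^ k := by
        have h1 : Bad.card = (Fintype.piFinset (fun _ : Fin k => A)).card :=
          Finset.card_bij' (fun ω _ => e ω) (fun σ _ => e.symm σ)
            (fun ω hω => by
              simp only [hBad, Finset.mem_filter, Finset.mem_univ, true_and] at hω
              rw [Fintype.mem_piFinset]
              intro j
              simp only [hA, Finset.mem_filter, Finset.mem_univ, true_and]
              exact hω j)
            (fun σ hσ => by
              rw [Fintype.mem_piFinset] at hσ
              simp only [hBad, Finset.mem_filter, Finset.mem_univ, true_and]
              intro j
              have hσj := hσ j
              simp only [hA, Finset.mem_filter, Finset.mem_univ, true_and] at hσj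
              simpa using hσj)
            (fun ω _ => by simp)
            (fun σ _ => by simp)
        rw [h1, Fintype.card_piFinset]
        simp
      have hne1 : ∀ a : ZMod 2, a ≠ 0 ↔ a = 1 := by decide
      have hGoodiff : ∀ ω : Fin N,
          (evalBool (1 - ∏ j : Fin k, (1 - ∑ i : Fin m, C (e ω j i) * X i)) x = ORval m x)
            ↔ ¬ ∀ j, ∑ i, e ω j i * b i = 0 := by
        intro ω
        rw [heval ω, hOR, sub_eq_self, Finset.prod_eq_zero_iff]
        simp only [Finset.mem_univ, true_and]
        constructor
        · rintro ⟨j, hj⟩ hall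
          rw [sub_eq_zero, hall j] at hj
          exact one_ne_zero hj
        · intro h
          push_neg at h
          obtain ⟨j, hj⟩ := h
          refine ⟨j, ?_⟩
          rw [sub_eq_zero]
          exact ((hne1 _).mp hj).symm
      have hsetEq : ({ω | evalBool
            (1 - ∏ j : Fin k, (1 - ∑ i : Fin m, C (e ω j i) * X i)) x = ORval m x} :
            Finset (Fin N))
          = Finset.univ.filter (fun ω => ¬ ∀ j, ∑ i, e ω j i * b i = 0) := by
        ext ω
        simp only [Finset.mem_filter, Finset.mem_univ, true_and]
        exact hGoodiff ω
      have hcards : Bad.card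
          + (Finset.univ.filter (fun ω : Fin N => ¬ ∀ j, ∑ i, e ω j i * b i = 0)).card = N := by
        rw [hBad]
        rw [Finset.card_filter_add_card_filter_not
          (fun ω : Fin N => ∀ j, ∑ i, e ω j i * b i = 0)]
        simp
      have hBadN : Bad.card * 2 ^ k = N := by
        rw [hBadcard, ← mul_pow, hAcard, hNval]
      rw [hsetEq, Finset.sum_const, nsmul_eq_mul]
      have hNposR : (0:ℝ) < N := by exact_mod_cast hNpos
      have h2kpos : (0:ℝ) < 2 ^ k := by positivity
      have hGoodR : ((Finset.univ.filter
          (fun ω : Fin N => ¬ ∀ j, ∑ i, e ω j i * b i = 0)).card : ℝ)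
          = N - Bad.card := by
        have h := congrArg (Nat.cast : ℕ → ℝ) hcards
        push_cast at h
        linarith
      rw [hGoodR, ← div_eq_mul_inv, le_div_iff₀ hNposR]
      have hBadR : (Bad.card : ℝ) * 2 ^ k = N := by exact_mod_cast hBadN
      have h1 : 1 ≤ ε * 2 ^ k := by
        rw [div_le_iff₀ hε0] at h2k
        linarith
      nlinarith [hBadR, h1, hNposR, h2kpos, hε0.le]
    · -- all-zero input: always correct
      have hOR : ORval m x = 0 := by simp [ORval, hx]
      have hb0 : ∀ i, b i = 0 := by
        intro i
        have hxi : x i ≠ true := fun h => hx ⟨i, h⟩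
        simp [hb, hxi]
      have hall : ∀ ω : Fin N,
          evalBool (1 - ∏ j : Fin k, (1 - ∑ i : Fin m, C (e ω j i) * X i)) x = ORval m x := by
        intro ω
        rw [heval, hOR]
        simp [hb0]
      have : ({ω | evalBool (1 - ∏ j : Fin k, (1 - ∑ i : Fin m, C (e ω j i) * X i)) x
          = ORval m x} : Finset (Fin N)) = Finset.univ := by
        apply Finset.filter_true_of_mem
        intro ω _; exact hall ω
      rw [this, Finset.sum_const, Finset.card_univ, Fintype.card_fin, nsmul_eq_mul]
      rw [mul_inv_cancel₀ (by positivity)]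
      linarith
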